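/- For |q| < 1, the series σ(q) = 1 + Σ_{n≥1} q^{n(n+1)/2}/((1+q)(1+q^2)⋯(1+q^n)) satisfies σ(q) = 1 + Σ_{n≥0} q^{n+1}(q-1)(q^2-1)⋯(q^n-1). -/

import Mathlib

open Finset

/-- Gaussian binomial coefficient as a function of complex `q`, via a Pascal recursion. -/
noncomputable def qbinom (q : ℂ) : ℕ → ℕ → ℂ
  | _, 0 => 1
  | 0, _+1 => 0
  | n+1, j+1 => qbinom q n j + q^(j+1) * qbinom q n (j+1)

lemma qbinom_zero_right (q : ℂ) (n : ℕ) : qbinom q n 0 = 1 := by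
  cases n <;> rfl

lemma qbinom_eq_zero (q : ℂ) : ∀ n j, n < j → qbinom q n j = 0 := by
  intro n
  induction n with
  | zero => intro j hj; cases j with
    | zero => omega
    | succ j => rfl
  | succ n ih =>
    intro j hj
    cases j with
    | zero => omega
    | succ j =>
      show qbinom q n j + q^(j+1) * qbinom q n (j+1) = 0
      rw [ih j (by omega), ih (j+1) (by omega)]
      ring

lemma tri_succ (j : ℕ) : (j+1)*(j+2)/2 = j*(j+1)/2 + (j+1) := by
  have h : (j+1)*(j+2) = j*(j+1) + (j+1)*2 := by ring
  rw [h, Nat.add_mul_div_right _ _ (by norm_num)]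

lemma tri_step (j : ℕ) : j*(j-1)/2 + j = j*(j+1)/2 := by
  cases j with
  | zero => rfl
  | succ j =>
    simp only [Nat.add_sub_cancel]
    have h : (j+1)*(j+2) = (j+1)*j + (j+1)*2 := by ring
    rw [show j+1+1 = j+2 from rfl, h, Nat.add_mul_div_right _ _ (by norm_num)]

lemma gauss_binom (q : ℂ) : ∀ n : ℕ, ∀ x : ℂ,
    ∏ k ∈ range n, (1 - x * q^k) =
      ∑ j ∈ range (n+1), (-1)^j * q^(j*(j-1)/2) * qbinom q n j * x^j := by
  intro n
  induction n with
  | zero => intro x; simp [qbinom_zero_right]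
  | succ n ih =>
    intro x
    set f : ℕ → ℂ := fun j => (-1)^j * q^(j*(j-1)/2) * qbinom q n j * (x*q)^j with hf
    have key : ∏ k ∈ range (n+1), (1 - x * q^k) = (∑ j ∈ range (n+1), f j) * (1 - x) := by
      rw [Finset.prod_range_succ']
      have h1 : ∀ k ∈ range n, (1 - x * q^(k+1)) = (1 - (x*q) * q^k) := by
        intro k _; ring
      rw [Finset.prod_congr rfl h1, ih (x*q), pow_zero, mul_one]
    rw [key]
    have hsplit : (∑ j ∈ range (n+1), f j) * (1 - x)
        = (∑ j ∈ range (n+1), f (j+1) + f 0) - ∑ j ∈ range (n+1), f j * x := by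
      have h0 : ∑ j ∈ range (n+1), f (j+1) = ∑ j ∈ range n, f (j+1) := by
        rw [Finset.sum_range_succ]
        have : f (n+1) = 0 := by
          simp [hf, qbinom_eq_zero q n (n+1) (by omega)]
        rw [this, add_zero]
      rw [h0, ← Finset.sum_range_succ' f n]
      rw [mul_one_sub, Finset.sum_mul]
    rw [hsplit]
    conv_rhs => rw [Finset.sum_range_succ']
    have hg0 : (-1:ℂ)^0 * q^(0*(0-1)/2) * qbinom q (n+1) 0 * x^0 = 1 := by
      simp [qbinom_zero_right]
    rw [hg0]
    have hf0 : f 0 = 1 := by simp [hf, qbinom_zero_right]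
    rw [hf0, add_sub_right_comm, ← Finset.sum_sub_distrib]
    congr 1
    apply Finset.sum_congr rfl
    intro j _
    have hb : qbinom q (n+1) (j+1) = qbinom q n j + q^(j+1) * qbinom q n (j+1) := rfl
    have he : (j+1)*((j+1)-1)/2 = j*(j-1)/2 + j := by
      simp only [Nat.add_sub_cancel]
      rw [mul_comm (j+1) j, ← tri_step j]
    rw [hb]
    simp only [hf]
    rw [he]
    rw [pow_add]
    ring

lemma qbinom_norm_le (q : ℂ) (hq : ‖q‖ < 1) : ∀ n j, ‖qbinom q n j‖ ≤ ((1 - ‖q‖)⁻¹)^j := by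
  have hr0 : (0:ℝ) ≤ ‖q‖ := norm_nonneg q
  have hr1 : (0:ℝ) < 1 - ‖q‖ := by linarith
  have hc1 : (1:ℝ) ≤ (1 - ‖q‖)⁻¹ := by
    rw [le_inv_comm₀ one_pos hr1]; linarith
  intro n
  induction n with
  | zero =>
    intro j
    cases j with
    | zero => simp [qbinom_zero_right]
    | succ j =>
      rw [qbinom_eq_zero q 0 (j+1) (by omega), norm_zero]
      positivity
  | succ n ih =>
    intro j
    cases j with
    | zero => simp [qbinom_zero_right]
    | succ j =>
      have hb : qbinom q (n+1) (j+1) = qbinom q n j + q^(j+1) * qbinom q n (j+1) := rfl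
      rw [hb]
      calc ‖qbinom q n j + q^(j+1) * qbinom q n (j+1)‖
          ≤ ‖qbinom q n j‖ + ‖q‖^(j+1) * ‖qbinom q n (j+1)‖ := by
            refine (norm_add_le _ _).trans ?_
            rw [norm_mul, norm_pow]
        _ ≤ ((1-‖q‖)⁻¹)^j + ‖q‖ * ((1-‖q‖)⁻¹)^(j+1) := by
            refine add_le_add (ih j) ?_
            have h1 : ‖q‖^(j+1) ≤ ‖q‖ := by
              calc ‖q‖^(j+1) ≤ ‖q‖^1 := pow_le_pow_of_le_one hr0 hq.le (by omega)
                _ = ‖q‖ := pow_one _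
            refine mul_le_mul h1 (ih (j+1)) (norm_nonneg _) hr0
        _ = ((1-‖q‖)⁻¹)^(j+1) := by
            have key : 1 + ‖q‖*(1-‖q‖)⁻¹ = (1-‖q‖)⁻¹ := by
              have h := mul_inv_cancel₀ hr1.ne'
              linear_combination -h
            have hfac : ((1-‖q‖)⁻¹)^j + ‖q‖*(((1-‖q‖)⁻¹)^j*(1-‖q‖)⁻¹)
                = ((1-‖q‖)⁻¹)^j * (1 + ‖q‖*(1-‖q‖)⁻¹) := by ring
            rw [pow_succ, hfac, key]

lemma one_add_qpow_ne (q : ℂ) (hq : ‖q‖ < 1) (m : ℕ) : (1:ℂ) + q^(m+1) ≠ 0 := by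
  intro h
  have h1 : ‖q^(m+1)‖ < 1 := by
    rw [norm_pow]
    exact pow_lt_one₀ (norm_nonneg q) hq (by omega)
  have h2 : q^(m+1) = -1 := by linear_combination h
  rw [h2, norm_neg, norm_one] at h1
  exact lt_irrefl _ h1

lemma summable_qb (q : ℂ) (hq : ‖q‖ < 1) (j : ℕ) :
    Summable (fun n => (-q)^n * qbinom q n j) := by
  apply Summable.of_norm_bounded (g := fun n => ((1-‖q‖)⁻¹)^j * ‖q‖^n)
    ((summable_geometric_of_lt_one (norm_nonneg q) hq).mul_left _)
  intro n
  rw [norm_mul, norm_pow, norm_neg, mul_comm]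
  exact mul_le_mul_of_nonneg_right (qbinom_norm_le q hq n j) (pow_nonneg (norm_nonneg q) n)

lemma qb_geom (q : ℂ) (hq : ‖q‖ < 1) : ∀ j : ℕ, ∑' n : ℕ, (-q)^n * qbinom q n j
    = (-1)^j * q^j / ∏ k ∈ range (j+1), (1 + q^(k+1)) := by
  intro j
  induction j with
  | zero =>
    simp only [qbinom_zero_right, mul_one, pow_zero, zero_add, Finset.prod_range_one, one_mul]
    rw [tsum_geometric_of_norm_lt_one (by rwa [norm_neg]), sub_neg_eq_add, pow_one, one_div]
  | succ j ih =>
    set P := ∏ k ∈ range (j+1), (1 + q^(k+1)) with hP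
    have hPne : P ≠ 0 := Finset.prod_ne_zero_iff.mpr fun k _ => one_add_qpow_ne q hq k
    have hne2 : (1:ℂ) + q^(j+2) ≠ 0 := one_add_qpow_ne q hq (j+1)
    have hS := summable_qb q hq (j+1)
    have hshift : (∑' n : ℕ, (-q)^n * qbinom q n (j+1))
        = (-q)^0 * qbinom q 0 (j+1) + ∑' n : ℕ, (-q)^(n+1) * qbinom q (n+1) (j+1) :=
      Summable.tsum_eq_zero_add hS
    have h0 : (-q)^0 * qbinom q 0 (j+1) = 0 := by
      rw [qbinom_eq_zero q 0 (j+1) (by omega)]; ring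
    have hexp : ∀ n : ℕ, (-q)^(n+1) * qbinom q (n+1) (j+1)
        = (-q) * ((-q)^n * qbinom q n j) + ((-q)*q^(j+1)) * ((-q)^n * qbinom q n (j+1)) := by
      intro n
      rw [show qbinom q (n+1) (j+1) = qbinom q n j + q^(j+1) * qbinom q n (j+1) from rfl]
      ring
    have hA : Summable (fun n => (-q) * ((-q)^n * qbinom q n j)) :=
      (summable_qb q hq j).mul_left _
    have hB : Summable (fun n => ((-q)*q^(j+1)) * ((-q)^n * qbinom q n (j+1))) :=
      hS.mul_left _
    rw [h0, zero_add, tsum_congr hexp, Summable.tsum_add hA hB, tsum_mul_left, tsum_mul_left, ih] at hshift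
    rw [Finset.prod_range_succ, ← hP]
    rw [eq_div_iff (mul_ne_zero hPne hne2)]
    set S := ∑' n : ℕ, (-q)^n * qbinom q n (j+1) with hSdef
    have hcan : (-1:ℂ)^j * q^j / P * P = (-1)^j * q^j := div_mul_cancel₀ _ hPne
    have h2 : S * P = (-q)*((-1)^j*q^j) + ((-q)*q^(j+1)) * (S * P) := by
      linear_combination P * hshift + (-q) * hcan
    linear_combination h2

set_option maxHeartbeats 1000000 in
theorem sigma_roots_of_unity_identity (q : ℂ) (hq : ‖q‖ < 1) :
    1 + ∑' n : ℕ, q ^ ((n + 1) * (n + 2) / 2) / ∏ k ∈ range (n + 1), (1 + q ^ (k + 1)) =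
      1 + ∑' n : ℕ, q ^ (n + 1) * ∏ k ∈ range n, (q ^ (k + 1) - 1) := by
  congr 1
  have hr0 : (0:ℝ) ≤ ‖q‖ := norm_nonneg q
  have h1r : (0:ℝ) < 1 - ‖q‖ := by linarith
  set c : ℝ := (1-‖q‖)⁻¹ with hc
  have hc0 : (0:ℝ) ≤ c := by positivity
  set f : ℕ → ℕ → ℂ := fun n j => (-1)^(n+j) * q^(n+1+j*(j+1)/2) * qbinom q n j with hf
  -- summability of the double sum
  have hs1 : Summable (fun n : ℕ => ‖q‖^(n+1)) :=
    (summable_nat_add_iff 1).mpr (summable_geometric_of_lt_one hr0 hq)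
  have hs2 : Summable (fun j : ℕ => ‖q‖^(j*(j+1)/2) * c^j) := by
    apply summable_of_ratio_norm_eventually_le (r := 1/2) (by norm_num)
    have h0 : Filter.Tendsto (fun j : ℕ => ‖q‖^(j+1)) Filter.atTop (nhds 0) :=
      (tendsto_pow_atTop_nhds_zero_of_lt_one hr0 hq).comp (Filter.tendsto_add_atTop_nat 1)
    have ht : Filter.Tendsto (fun j : ℕ => ‖q‖^(j+1) * c) Filter.atTop (nhds 0) := by
      simpa using h0.mul_const c
    filter_upwards [ht.eventually_le_const (by norm_num : (0:ℝ) < 1/2)] with j hj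
    rw [Real.norm_of_nonneg (by positivity), Real.norm_of_nonneg (by positivity)]
    calc ‖q‖^((j+1)*(j+2)/2) * c^(j+1)
        = (‖q‖^(j*(j+1)/2) * c^j) * (‖q‖^(j+1) * c) := by
          rw [tri_succ j, pow_add, pow_succ]; ring
      _ ≤ (‖q‖^(j*(j+1)/2) * c^j) * (1/2) :=
          mul_le_mul_of_nonneg_left hj (by positivity)
      _ = 1/2 * (‖q‖^(j*(j+1)/2) * c^j) := by ring
  have hgsum : Summable (fun p : ℕ×ℕ => ‖q‖^(p.1+1) * (‖q‖^(p.2*(p.2+1)/2) * c^p.2)) :=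
    Summable.mul_of_nonneg hs1 hs2 (fun n => by positivity) (fun j => by positivity)
  have hFsum : Summable (Function.uncurry f) := by
    apply Summable.of_norm_bounded hgsum
    rintro ⟨n, j⟩
    show ‖f n j‖ ≤ ‖q‖^(n+1) * (‖q‖^(j*(j+1)/2) * c^j)
    rw [hf]
    simp only []
    rw [norm_mul, norm_mul, norm_pow, norm_pow, norm_neg, norm_one, one_pow, one_mul,
      pow_add]
    rw [mul_assoc]
    refine mul_le_mul_of_nonneg_left ?_ (by positivity)
    exact mul_le_mul_of_nonneg_left (qbinom_norm_le q hq n j) (by positivity)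
  -- step 1 : each term of the RHS series as a tsum over j
  have step1 : ∀ n : ℕ, q^(n+1) * ∏ k ∈ range n, (q^(k+1) - 1) = ∑' j : ℕ, f n j := by
    intro n
    have hvan : ∀ j ∉ range (n+1), f n j = 0 := by
      intro j hj
      rw [Finset.mem_range, not_lt] at hj
      rw [hf]
      simp only []
      rw [qbinom_eq_zero q n j (by omega), mul_zero]
    rw [tsum_eq_sum hvan]
    have hneg : ∏ k ∈ range n, (q^(k+1) - 1) = (-1)^n * ∏ k ∈ range n, (1 - q*q^k) := by
      calc ∏ k ∈ range n, (q^(k+1) - 1)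
          = ∏ k ∈ range n, ((-1) * (1 - q*q^k)) := by
            refine Finset.prod_congr rfl fun k _ => ?_
            rw [pow_succ]; ring
        _ = (∏ _k ∈ range n, (-1:ℂ)) * ∏ k ∈ range n, (1-q*q^k) := Finset.prod_mul_distrib
        _ = (-1)^n * ∏ k ∈ range n, (1-q*q^k) := by rw [Finset.prod_const, Finset.card_range]
    rw [hneg, gauss_binom q n q, Finset.mul_sum, Finset.mul_sum]
    refine Finset.sum_congr rfl fun j _ => ?_
    rw [hf]
    simp only []
    rw [show n+1+j*(j+1)/2 = n+1+(j*(j-1)/2+j) by rw [tri_step], pow_add, pow_add, pow_add,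
      pow_succ]
    ring
  -- step 3 : each inner tsum over n evaluates to a term of the LHS series
  have step3 : ∀ j : ℕ, ∑' n : ℕ, f n j
      = q^((j+1)*(j+2)/2) / ∏ k ∈ range (j+1), (1 + q^(k+1)) := by
    intro j
    have hfc : ∀ n, f n j = ((-1)^j * q^(1 + j*(j+1)/2)) * ((-q)^n * qbinom q n j) := by
      intro n
      rw [hf]
      simp only []
      rw [show (-q)^n = (-1:ℂ)^n * q^n from neg_pow q n, pow_add (-1:ℂ) n j,
        show n+1+j*(j+1)/2 = n+(1+j*(j+1)/2) by omega, pow_add q n]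
      ring
    rw [tsum_congr hfc, tsum_mul_left, qb_geom q hq j, mul_div_assoc']
    congr 1
    have hT : 1 + j*(j+1)/2 + j = (j+1)*(j+2)/2 := by rw [tri_succ]; omega
    have hneg1 : (-1:ℂ)^j * (-1)^j = 1 := by
      rw [← pow_add]
      exact Even.neg_one_pow ⟨j, by omega⟩
    calc (-1:ℂ)^j * q^(1 + j*(j+1)/2) * ((-1)^j * q^j)
        = ((-1:ℂ)^j * (-1)^j) * (q^(1 + j*(j+1)/2) * q^j) := by ring
      _ = q^(1 + j*(j+1)/2 + j) := by rw [hneg1, one_mul, ← pow_add]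
      _ = q^((j+1)*(j+2)/2) := by rw [hT]
  calc ∑' n : ℕ, q ^ ((n + 1) * (n + 2) / 2) / ∏ k ∈ range (n + 1), (1 + q ^ (k + 1))
      = ∑' j : ℕ, ∑' n : ℕ, f n j := (tsum_congr step3).symm
    _ = ∑' n : ℕ, ∑' j : ℕ, f n j := Summable.tsum_comm hFsum
    _ = ∑' n : ℕ, q ^ (n + 1) * ∏ k ∈ range n, (q ^ (k + 1) - 1) := (tsum_congr step1).symm
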